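/- If H ⊑* G and G is flat, then H is flat. -/

import Mathlib

open scoped Classical

/-- A combinatorial pregeometry (matroid) on the ground type `α`, given by a
dimension (rank) function on finite subsets. -/
structure Pregeometry (α : Type*) [DecidableEq α] where
  dim : Finset α → ℕ
  dim_empty : dim ∅ = 0
  dim_le_insert : ∀ (A : Finset α) (x : α), dim A ≤ dim (insert x A)
  insert_le_dim : ∀ (A : Finset α) (x : α), dim (insert x A) ≤ dim A + 1
  submodular : ∀ A B : Finset α, dim (A ∪ B) + dim (A ∩ B) ≤ dim A + dim B

namespace Pregeometry

variable {α : Type*} [DecidableEq α] (G : Pregeometry α)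

/-- Closure of an arbitrary subset. -/
def cl (Y : Set α) : Set α :=
  {x | ∃ A : Finset α, ↑A ⊆ Y ∧ G.dim (insert x A) = G.dim A}

/-- `Y` is closed (in the ambient pregeometry `G`). -/
def IsClosed (Y : Set α) : Prop := G.cl Y = Y

/-- `X` is a closed set of the subpregeometry of `G` induced on `P`
(whose closure operator is `Y ↦ cl Y ∩ P`). -/
def IsClosedIn (P X : Set α) : Prop := X ⊆ P ∧ G.cl X ∩ P = X

/-- Dimension of an arbitrary subset, with value `⊤` when infinite-dimensional. -/
noncomputable def edim (Y : Set α) : ℕ∞ :=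
  ⨆ (A : Finset α) (_ : ↑A ⊆ Y), (G.dim A : ℕ∞)

/-- The (natural number) dimension of a finite-dimensional subset. -/
noncomputable def sdim (Y : Set α) : ℕ := (G.edim Y).toNat

/-- The alternating inclusion–exclusion sum
`Δ_G(Σ) = Σ_{∅ ≠ S ⊆ Σ} (-1)^{|S|+1} d(⋂ S)` of a finite collection of sets. -/
noncomputable def flatSum (Sig : Finset (Set α)) : ℤ :=
  ∑ S ∈ Sig.powerset.filter (· ≠ ∅),
    (-1) ^ (S.card + 1) * (G.sdim (⋂₀ ↑S) : ℤ)

/-- `P ⊑* Q`: for the subpregeometries induced on `P ⊆ Q`, the dimension of the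
intersection of two closed sets of `P` equals the dimension of the intersection
of their closures in `Q` (the closure of `X` in `Q` being `cl X ∩ Q`). -/
def SqStar (P Q : Set α) : Prop := P ⊆ Q ∧
  ∀ X₁ X₂ : Set α, G.IsClosedIn P X₁ → G.IsClosedIn P X₂ →
    G.edim (X₁ ∩ X₂) = G.edim (G.cl X₁ ∩ G.cl X₂ ∩ Q)

/-- `P ⊑ Q`: `P` is strongly embedded in `Q`: for every finite collection `Σ` of
finite-dimensional closed sets of `Q`, `Δ_P(Σ_P) ≤ Δ_Q(Σ)` where
`Σ_P = {E ∩ P : E ∈ Σ}`. -/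
def Sq (P Q : Set α) : Prop := P ⊆ Q ∧
  ∀ Sig : Finset (Set α), (∀ E ∈ Sig, G.IsClosedIn Q E) →
    (∀ E ∈ Sig, G.edim E ≠ ⊤) →
    G.flatSum (Sig.image (· ∩ P)) ≤ G.flatSum Sig

/-- The subpregeometry induced on `P` is flat: every finite collection of
finite-dimensional closed sets satisfies `d(⋃ Σ) ≤ Δ(Σ)`. -/
def FlatIn (P : Set α) : Prop :=
  ∀ Sig : Finset (Set α), (∀ E ∈ Sig, G.IsClosedIn P E) →
    (∀ E ∈ Sig, G.edim E ≠ ⊤) →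
    (G.sdim (⋃₀ ↑Sig) : ℤ) ≤ G.flatSum Sig

/-- The α-function of the subpregeometry of `G` induced on `P`:
`α(X) = |X| − d(X) − Σ_{Y ⊊ X closed} α(Y)`. -/
noncomputable def alphaIn (P : Set α) (X : Finset α) : ℤ :=
  (X.card : ℤ) - (G.dim X : ℤ) -
    ∑ Y ∈ (X.powerset.filter fun Y => Y ≠ X ∧ G.IsClosedIn P ↑Y).attach,
      alphaIn P Y.1
termination_by X.card
decreasing_by
  have h := Y.2
  simp only [Finset.mem_filter, Finset.mem_powerset] at h
  exact Finset.card_lt_card (lt_of_le_of_ne h.1 h.2.1)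

end Pregeometry

/-- A hypergraph on the vertex type `α`: a set of nonempty finite edges. -/
structure Hypergraph' (α : Type*) where
  edges : Set (Finset α)
  nonempty_edges : ∀ e ∈ edges, e ≠ ∅

namespace Hypergraph'

variable {α : Type*} [DecidableEq α] (A : Hypergraph' α)

/-- The set of edges contained in a set of vertices. -/
def edgesIn (P : Set α) : Set (Finset α) := {e | e ∈ A.edges ∧ ↑e ⊆ P}

/-- The predimension `δ(P) = |P| − |R[P]|` of a finite set of vertices. -/
noncomputable def delta (P : Finset α) : ℤ :=
  (P.card : ℤ) - (A.edgesIn ↑P).ncard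

/-- The relative predimension `δ(L/P) = |L∖P| − |R[L∪P]∖R[P]|`. -/
noncomputable def deltaRel (L : Finset α) (P : Set α) : ℤ :=
  ((↑L \ P : Set α).ncard : ℤ) -
    ({e | e ∈ A.edges ∧ ↑e ⊆ ↑L ∪ P ∧ ¬ ↑e ⊆ P} : Set (Finset α)).ncard

/-- `P` is self-sufficient in `A`: `δ(X/P) ≥ 0` for every finite `X`, stated so
as to be meaningful even when infinitely many edges are involved. -/
def SelfSuff (P : Set α) : Prop :=
  ∀ X : Finset α, ∀ Es : Finset (Finset α),
    (∀ e ∈ Es, e ∈ A.edges ∧ ↑e ⊆ ↑X ∪ P ∧ ¬ ↑e ⊆ P) →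
    (Es.card : ℤ) ≤ ((↑X \ P : Set α).ncard : ℤ)

/-- The dimension function associated to a hypergraph:
`d(X) = inf {δ(B) : X ⊆ B finite}`. -/
noncomputable def hdim (X : Finset α) : ℤ :=
  sInf {d : ℤ | ∃ B : Finset α, X ⊆ B ∧ d = A.delta B}

/-- The induced subhypergraph on a set `P` of vertices (keeping `α` as the
ambient vertex type). -/
def restrict (P : Set α) : Hypergraph' α :=
  ⟨{e | e ∈ A.edges ∧ ↑e ⊆ P}, fun e he => A.nonempty_edges e he.1⟩

/-- A pregeometry `G` is represented by the hypergraph `A` if the associated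
dimension function of `A` is the dimension function of `G`. -/
def Represents (G : Pregeometry α) : Prop :=
  ∀ X : Finset α, (G.dim X : ℤ) = A.hdim X

end Hypergraph'

namespace Pregeometry

variable {α : Type*} [DecidableEq α] (G : Pregeometry α)

lemma dim_le_union (A B : Finset α) : G.dim A ≤ G.dim (B ∪ A) := by
  induction B using Finset.induction_on with
  | empty => simp
  | @insert x B hx ih =>
    calc G.dim A ≤ G.dim (B ∪ A) := ih
    _ ≤ G.dim (insert x (B ∪ A)) := G.dim_le_insert _ _
    _ = G.dim (insert x B ∪ A) := by rw [Finset.insert_union]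

lemma dim_mono {A B : Finset α} (h : A ⊆ B) : G.dim A ≤ G.dim B := by
  have := G.dim_le_union A B
  rwa [Finset.union_eq_left.2 h] at this

lemma dim_le_edim {A : Finset α} {S : Set α} (hA : ↑A ⊆ S) :
    (G.dim A : ℕ∞) ≤ G.edim S :=
  le_iSup₂ (f := fun (A : Finset α) (_ : ↑A ⊆ S) => (G.dim A : ℕ∞)) A hA

lemma edim_mono {S T : Set α} (h : S ⊆ T) : G.edim S ≤ G.edim T :=
  iSup₂_le fun A hA => G.dim_le_edim (hA.trans h)

lemma edim_coe_sdim {S : Set α} (h : G.edim S ≠ ⊤) : G.edim S = (G.sdim S : ℕ∞) :=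
  (ENat.coe_toNat h).symm

lemma dim_le_sdim {S : Set α} {A : Finset α} (h : G.edim S ≠ ⊤) (hA : ↑A ⊆ S) :
    G.dim A ≤ G.sdim S := by
  have h1 := G.dim_le_edim hA
  rw [G.edim_coe_sdim h] at h1
  exact_mod_cast h1

lemma exists_dim_eq_sdim {S : Set α} (h : G.edim S ≠ ⊤) :
    ∃ A : Finset α, ↑A ⊆ S ∧ G.dim A = G.sdim S := by
  by_contra hc
  push_neg at hc
  cases hn : G.sdim S with
  | zero =>
    exact hc ∅ (by simp) (by rw [G.dim_empty, hn])
  | succ m =>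
    have hle : G.edim S ≤ (m : ℕ∞) := by
      refine iSup₂_le fun A hA => ?_
      have h1 := G.dim_le_sdim h hA
      have h2 := hc A hA
      rw [hn] at h1 h2
      exact_mod_cast Nat.lt_succ_iff.1 (lt_of_le_of_ne h1 h2)
    rw [G.edim_coe_sdim h, hn] at hle
    have : m + 1 ≤ m := by exact_mod_cast hle
    omega

lemma subset_cl (Y : Set α) : Y ⊆ G.cl Y := fun x hx =>
  ⟨{x}, by simpa, by rw [Finset.insert_eq_self.2 (Finset.mem_singleton_self x)]⟩

lemma cl_mono {X Y : Set α} (h : X ⊆ Y) : G.cl X ⊆ G.cl Y := by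
  rintro x ⟨A, hA, hd⟩
  exact ⟨A, hA.trans h, hd⟩

lemma cl_subset_cl {X W : Set α} (hXW : X ⊆ W) (hle : G.edim W ≤ G.edim X)
    (hfin : G.edim X ≠ ⊤) : G.cl W ⊆ G.cl X := by
  rintro x ⟨A, hA, hdA⟩
  obtain ⟨B, hB, hdB⟩ := G.exists_dim_eq_sdim hfin
  have hABW : ↑(A ∪ B) ⊆ W := by
    rw [Finset.coe_union]
    exact Set.union_subset hA (hB.trans hXW)
  have h1 : G.dim (A ∪ B) ≤ G.sdim X := by
    have := (G.dim_le_edim hABW).trans (hle.trans (G.edim_coe_sdim hfin).le)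
    exact_mod_cast this
  have hsub := G.submodular (insert x A) (A ∪ B)
  have hu : insert x A ∪ (A ∪ B) = insert x (A ∪ B) := by
    rw [Finset.insert_union, ← Finset.union_assoc, Finset.union_self]
  rw [hu, hdA] at hsub
  have h4 : G.dim A ≤ G.dim (insert x A ∩ (A ∪ B)) :=
    G.dim_mono (Finset.subset_inter (Finset.subset_insert x A) Finset.subset_union_left)
  have h3 : G.dim (insert x (A ∪ B)) ≤ G.sdim X := by omega
  refine ⟨B, hB, le_antisymm ?_ (G.dim_le_insert B x)⟩
  calc G.dim (insert x B) ≤ G.dim (insert x (A ∪ B)) :=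
        G.dim_mono (Finset.insert_subset_insert x Finset.subset_union_right)
  _ ≤ G.sdim X := h3
  _ = G.dim B := hdB.symm

lemma edim_union_le (S T : Set α) : G.edim (S ∪ T) ≤ G.edim S + G.edim T := by
  classical
  refine iSup₂_le fun A hA => ?_
  set A₁ := A.filter (fun a => a ∈ S) with hA₁def
  set A₂ := A.filter (fun a => a ∉ S) with hA₂def
  have hA₁ : ↑A₁ ⊆ S := fun a ha => (Finset.mem_filter.1 ha).2
  have hA₂ : ↑A₂ ⊆ T := by
    intro a ha
    have h := Finset.mem_filter.1 ha
    rcases hA h.1 with hS | hT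
    · exact absurd hS h.2
    · exact hT
  have hAu : A₁ ∪ A₂ = A := Finset.filter_union_filter_not_eq _ A
  have hd : G.dim A ≤ G.dim A₁ + G.dim A₂ := by
    have := G.submodular A₁ A₂
    rw [hAu] at this
    omega
  calc (G.dim A : ℕ∞) ≤ (G.dim A₁ : ℕ∞) + (G.dim A₂ : ℕ∞) := by exact_mod_cast hd
  _ ≤ G.edim S + G.edim T := add_le_add (G.dim_le_edim hA₁) (G.dim_le_edim hA₂)

lemma edim_empty : G.edim (∅ : Set α) ≠ ⊤ := by
  have : G.edim (∅ : Set α) ≤ (0 : ℕ∞) := by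
    refine iSup₂_le fun A hA => ?_
    have : A = ∅ := Finset.coe_eq_empty.1 (Set.subset_empty_iff.1 hA)
    simp [this, G.dim_empty]
  exact ne_top_of_le_ne_top (by simp) this

lemma edim_sUnion_ne_top (s : Finset (Set α)) (h : ∀ E ∈ s, G.edim E ≠ ⊤) :
    G.edim (⋃₀ ↑s) ≠ ⊤ := by
  induction s using Finset.induction_on with
  | empty => simpa using G.edim_empty
  | @insert X t hx ih =>
    rw [Finset.coe_insert, Set.sUnion_insert]
    refine ne_top_of_le_ne_top (WithTop.add_ne_top.2 ⟨h X (Finset.mem_insert_self X t),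
      ih fun E hE => h E (Finset.mem_insert_of_mem hE)⟩) (G.edim_union_le _ _)

lemma isClosedIn_inter {P X Y : Set α} (hX : G.IsClosedIn P X) (hY : G.IsClosedIn P Y) :
    G.IsClosedIn P (X ∩ Y) := by
  refine ⟨Set.inter_subset_left.trans hX.1, Set.Subset.antisymm ?_ ?_⟩
  · intro x hx
    have h1 : x ∈ X := by rw [← hX.2]; exact ⟨G.cl_mono Set.inter_subset_left hx.1, hx.2⟩
    have h2 : x ∈ Y := by rw [← hY.2]; exact ⟨G.cl_mono Set.inter_subset_right hx.1, hx.2⟩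
    exact ⟨h1, h2⟩
  · intro x hx
    exact ⟨G.subset_cl _ hx, hX.1 hx.1⟩

lemma edim_cl_eq {H : Set α} (hH : G.SqStar H Set.univ) {X : Set α}
    (hX : G.IsClosedIn H X) : G.edim (G.cl X) = G.edim X := by
  have h := hH.2 X X hX hX
  simp only [Set.inter_self, Set.inter_univ] at h
  exact h.symm

lemma cl_cl_eq {H : Set α} (hH : G.SqStar H Set.univ) {X : Set α}
    (hX : G.IsClosedIn H X) (hfin : G.edim X ≠ ⊤) : G.cl (G.cl X) = G.cl X := by
  refine Set.Subset.antisymm ?_ (G.subset_cl _)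
  exact G.cl_subset_cl (G.subset_cl X) (G.edim_cl_eq hH hX).le hfin

lemma sInter_key {H : Set α} (hH : G.SqStar H Set.univ) {s : Finset (Set α)}
    (hs : s.Nonempty) (hcl : ∀ E ∈ s, G.IsClosedIn H E) (hfin : ∀ E ∈ s, G.edim E ≠ ⊤) :
    G.IsClosedIn H (⋂₀ ↑s) ∧ G.edim (⋂₀ ↑s) ≠ ⊤ ∧
      G.edim (⋂₀ ↑s) = G.edim (⋂₀ ↑(s.image G.cl)) ∧
      G.cl (⋂₀ ↑s) = ⋂₀ ↑(s.image G.cl) := by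
  induction hs using Finset.Nonempty.cons_induction with
  | singleton X =>
    have hX := hcl X (by simp)
    have hfX := hfin X (by simp)
    have hXX := hH.2 X X hX hX
    simp only [Set.inter_self, Set.inter_univ] at hXX
    simp only [Finset.image_singleton, Finset.coe_singleton, Set.sInter_singleton]
    exact ⟨hX, hfX, hXX, by simp⟩
  | cons X t hXt ht ih =>
    obtain ⟨ihc, ihf, ihe, ihcl⟩ := ih (fun E hE => hcl E (Finset.mem_cons_of_mem hE))
      (fun E hE => hfin E (Finset.mem_cons_of_mem hE))
    set Y := ⋂₀ (↑t : Set (Set α)) with hY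
    have hXY : ⋂₀ ↑(Finset.cons X t hXt) = X ∩ Y := by
      rw [Finset.cons_eq_insert, Finset.coe_insert, Set.sInter_insert]
    have hXc := hcl X (Finset.mem_cons_self X t)
    have hXf := hfin X (Finset.mem_cons_self X t)
    have hsq := hH.2 X Y hXc ihc
    rw [Set.inter_univ] at hsq
    have himg : ⋂₀ ↑((Finset.cons X t hXt).image G.cl) = G.cl X ∩ ⋂₀ ↑(t.image G.cl) := by
      rw [Finset.cons_eq_insert, Finset.image_insert, Finset.coe_insert, Set.sInter_insert]
    have hfXY : G.edim (X ∩ Y) ≠ ⊤ :=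
      ne_top_of_le_ne_top hXf (G.edim_mono Set.inter_subset_left)
    have hclXY : G.cl (X ∩ Y) = G.cl X ∩ G.cl Y := by
      apply Set.Subset.antisymm
      · exact Set.subset_inter (G.cl_mono Set.inter_subset_left)
          (G.cl_mono Set.inter_subset_right)
      · refine Set.Subset.trans (G.subset_cl _) (G.cl_subset_cl ?_ hsq.symm.le hfXY)
        exact Set.inter_subset_inter (G.subset_cl X) (G.subset_cl Y)
    refine ⟨?_, ?_, ?_, ?_⟩
    · rw [hXY]; exact G.isClosedIn_inter hXc ihc
    · rw [hXY]; exact hfXY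
    · rw [hXY, himg, ← ihcl]; exact hsq
    · rw [hXY, himg, ← ihcl]; exact hclXY

lemma flatSum_image_cl {H : Set α} (hH : G.SqStar H Set.univ) (Sig : Finset (Set α))
    (hcl : ∀ E ∈ Sig, G.IsClosedIn H E) (hfin : ∀ E ∈ Sig, G.edim E ≠ ⊤) :
    G.flatSum (Sig.image G.cl) = G.flatSum Sig := by
  classical
  unfold flatSum
  have hmemSig : ∀ E ∈ Sig.image G.cl, (E ∩ H) ∈ Sig ∧ G.cl (E ∩ H) = E := by
    intro E hE
    obtain ⟨X, hX, rfl⟩ := Finset.mem_image.1 hE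
    rw [(hcl X hX).2]
    exact ⟨hX, rfl⟩
  refine Finset.sum_nbij' (i := fun S => S.image (· ∩ H)) (j := fun S => S.image G.cl)
    ?_ ?_ ?_ ?_ ?_
  · intro S hS
    rw [Finset.mem_filter, Finset.mem_powerset] at hS ⊢
    constructor
    · intro y hy
      obtain ⟨E, hE, rfl⟩ := Finset.mem_image.1 hy
      exact (hmemSig E (hS.1 hE)).1
    · rw [← Finset.nonempty_iff_ne_empty] at hS ⊢
      exact hS.2.image _
  · intro S hS
    rw [Finset.mem_filter, Finset.mem_powerset] at hS ⊢
    refine ⟨Finset.image_subset_image hS.1, ?_⟩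
    rw [← Finset.nonempty_iff_ne_empty] at hS ⊢
    exact hS.2.image _
  · intro S hS
    rw [Finset.mem_filter, Finset.mem_powerset] at hS
    show (S.image (· ∩ H)).image G.cl = S
    rw [Finset.image_image]
    calc S.image (G.cl ∘ (· ∩ H)) = S.image id := by
          refine Finset.image_congr fun E hE => (hmemSig E (hS.1 hE)).2
    _ = S := Finset.image_id
  · intro S hS
    rw [Finset.mem_filter, Finset.mem_powerset] at hS
    show (S.image G.cl).image (· ∩ H) = S
    rw [Finset.image_image]
    calc S.image ((· ∩ H) ∘ G.cl) = S.image id := by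
          refine Finset.image_congr fun X hX => (hcl X (hS.1 hX)).2
    _ = S := Finset.image_id
  · intro S hS
    rw [Finset.mem_filter, Finset.mem_powerset] at hS
    have hT : ∀ E ∈ S.image (· ∩ H), G.IsClosedIn H E := by
      intro E hE
      obtain ⟨E', hE', rfl⟩ := Finset.mem_image.1 hE
      have h := hmemSig E' (hS.1 hE')
      exact hcl _ h.1
    have hTf : ∀ E ∈ S.image (· ∩ H), G.edim E ≠ ⊤ := by
      intro E hE
      obtain ⟨E', hE', rfl⟩ := Finset.mem_image.1 hE
      have h := hmemSig E' (hS.1 hE')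
      exact hfin _ h.1
    have hTne : (S.image (· ∩ H)).Nonempty := by
      rw [← Finset.nonempty_iff_ne_empty] at hS
      exact hS.2.image _
    obtain ⟨-, -, he, -⟩ := G.sInter_key hH hTne hT hTf
    have himg : (S.image (· ∩ H)).image G.cl = S := by
      rw [Finset.image_image]
      calc S.image (G.cl ∘ (· ∩ H)) = S.image id :=
            Finset.image_congr fun E hE => (hmemSig E (hS.1 hE)).2
      _ = S := Finset.image_id
    have hcard : (S.image (· ∩ H)).card = S.card := by
      refine le_antisymm (Finset.card_image_le) ?_
      conv_lhs => rw [← himg]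
      exact Finset.card_image_le
    rw [himg] at he
    have hsd : G.sdim (⋂₀ ↑S) = G.sdim (⋂₀ ↑(S.image (· ∩ H))) := by
      unfold sdim; rw [he]
    rw [hcard, hsd]

end Pregeometry

/-- if `H ⊑* G` and `G` is flat, then `H` is flat. -/
theorem flatIn_of_sqStar {α : Type*} [DecidableEq α] (G : Pregeometry α)
    (H : Set α) (hH : G.SqStar H Set.univ) (hG : G.FlatIn Set.univ) :
    G.FlatIn H := by
  intro Sig hcl hfin
  classical
  set Sig' := Sig.image G.cl with hSig'
  have hcl' : ∀ E ∈ Sig', G.IsClosedIn Set.univ E := by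
    intro E hE
    obtain ⟨X, hX, rfl⟩ := Finset.mem_image.1 hE
    exact ⟨Set.subset_univ _, by rw [Set.inter_univ, G.cl_cl_eq hH (hcl X hX) (hfin X hX)]⟩
  have hfin' : ∀ E ∈ Sig', G.edim E ≠ ⊤ := by
    intro E hE
    obtain ⟨X, hX, rfl⟩ := Finset.mem_image.1 hE
    rw [G.edim_cl_eq hH (hcl X hX)]
    exact hfin X hX
  have h1 := hG Sig' hcl' hfin'
  have h2 : G.flatSum Sig' = G.flatSum Sig := G.flatSum_image_cl hH Sig hcl hfin
  have h3 : G.sdim (⋃₀ ↑Sig) ≤ G.sdim (⋃₀ ↑Sig') := by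
    refine ENat.toNat_le_toNat (G.edim_mono ?_) (G.edim_sUnion_ne_top Sig' hfin')
    refine Set.sUnion_subset fun X hX => (G.subset_cl X).trans (Set.subset_sUnion_of_mem ?_)
    rw [Finset.mem_coe] at hX ⊢
    exact Finset.mem_image_of_mem _ hX
  calc (G.sdim (⋃₀ ↑Sig) : ℤ) ≤ (G.sdim (⋃₀ ↑Sig') : ℤ) := by exact_mod_cast h3
  _ ≤ G.flatSum Sig' := h1
  _ = G.flatSum Sig := h2
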